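/- Let w be a positive non-decreasing weight function with ∑ 1/w(n) = ∞. If w(n)/(n log log n) → ∞ as n → ∞, then α_c(w) = 0; if c⁻¹ n log log n ≤ w(n) ≤ c n log log n for some c > 0 and all large n, then α_c(w) ∈ (0,∞); and if w(n)/(n log log n) → 0, then α_c(w) = ∞. -/

import Mathlib

open MeasureTheory Filter Topology Set
open scoped ENNReal NNReal

noncomputable section

/-- Extension of a weight sequence to the reals: `w(t) = w(⌊t⌋)` (and `w 0` for `t < 0`). -/
def wext (w : ℕ → ℝ) (t : ℝ) : ℝ := w ⌊t⌋₊

/-- `W(t) = ∫₀ᵗ du / w(u)`. -/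
def Wfun (v : ℝ → ℝ) (t : ℝ) : ℝ := ∫ u in (0:ℝ)..t, (v u)⁻¹

/-- `I_α(w) = ∫₀^∞ dx / w(W⁻¹(W(x)+α))`, valued in `[0,∞]`. -/
def Ia (v : ℝ → ℝ) (Winv : ℝ → ℝ) (α : ℝ) : ℝ≥0∞ :=
  ∫⁻ x in Ioi (0:ℝ), ENNReal.ofReal (v (Winv (Wfun v x + α)))⁻¹

/-- The critical parameter `α_c(w) = inf {α ≥ 0 : I_α(w) < ∞} ∈ [0,∞]` (inf ∅ = ∞). -/
def alphac (v : ℝ → ℝ) (Winv : ℝ → ℝ) : ℝ≥0∞ :=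
  sInf (ENNReal.ofReal '' {α : ℝ | 0 < α ∧ Ia v Winv α < ⊤})

local notation "llog" x => Real.log (Real.log x)

variable {w : ℕ → ℝ}

lemma base_facts {x : ℝ} (hx : Real.exp (Real.exp 1) ≤ x) :
    1 < x ∧ Real.exp 1 ≤ Real.log x ∧ 1 ≤ llog x := by
  have h1 : (1:ℝ) < Real.exp (Real.exp 1) :=
    Real.one_lt_exp_iff.2 (Real.exp_pos 1)
  have hx1 : 1 < x := lt_of_lt_of_le h1 hx
  have h2 : Real.exp 1 ≤ Real.log x := by
    have := Real.log_le_log (Real.exp_pos _) hx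
    rwa [Real.log_exp] at this
  have h3 : 1 ≤ llog x := by
    have := Real.log_le_log (Real.exp_pos _) h2
    rwa [Real.log_exp] at this
  exact ⟨hx1, h2, h3⟩

lemma llog_mono {x y : ℝ} (hx : Real.exp (Real.exp 1) ≤ x) (hxy : x ≤ y) :
    (llog x) ≤ llog y := by
  obtain ⟨h1, h2, _⟩ := base_facts hx
  have hlx : 0 < Real.log x := lt_of_lt_of_le (Real.exp_pos 1) h2
  exact Real.log_le_log hlx (Real.log_le_log (by linarith) hxy)

lemma llog_pos {x : ℝ} (hx : Real.exp (Real.exp 1) ≤ x) : 0 < llog x :=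
  lt_of_lt_of_le one_pos (base_facts hx).2.2

lemma vpos (hpos : ∀ n, 0 < w n) (u : ℝ) : 0 < wext w u := hpos _

lemma vmono (hmono : Monotone w) : Monotone (wext w) :=
  fun _ _ h => hmono (Nat.floor_le_floor h)

lemma vinv_anti (hpos : ∀ n, 0 < w n) (hmono : Monotone w) :
    Antitone (fun u => (wext w u)⁻¹) :=
  fun _ _ h => inv_anti₀ (vpos hpos _) (vmono hmono h)

lemma vinv_ii (hpos : ∀ n, 0 < w n) (hmono : Monotone w) (a b : ℝ) :
    IntervalIntegrable (fun u => (wext w u)⁻¹) volume a b :=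
  (vinv_anti hpos hmono).intervalIntegrable

lemma Wfun_sub (hpos : ∀ n, 0 < w n) (hmono : Monotone w) (a b : ℝ) :
    Wfun (wext w) b = Wfun (wext w) a + ∫ u in a..b, (wext w u)⁻¹ :=
  (intervalIntegral.integral_add_adjacent_intervals
    (vinv_ii hpos hmono 0 a) (vinv_ii hpos hmono a b)).symm

lemma Wfun_strictMono (hpos : ∀ n, 0 < w n) (hmono : Monotone w) :
    StrictMono (Wfun (wext w)) := by
  intro a b hab
  have h1 : (b - a) * (wext w b)⁻¹ ≤ ∫ u in a..b, (wext w u)⁻¹ := by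
    have := intervalIntegral.integral_mono_on (μ := volume) hab.le
      (intervalIntegrable_const (c := (wext w b)⁻¹)) (vinv_ii hpos hmono a b)
      (fun x hx => inv_anti₀ (vpos hpos _) (vmono hmono hx.2))
    simpa using this
  have h2 : 0 < (b - a) * (wext w b)⁻¹ :=
    mul_pos (by linarith) (inv_pos.2 (vpos hpos b))
  have := Wfun_sub hpos hmono a b
  rw [this]; linarith

lemma Wfun_zero : Wfun (wext w) 0 = 0 := intervalIntegral.integral_same

lemma Wfun_nonneg (hpos : ∀ n, 0 < w n) (hmono : Monotone w) {x : ℝ} (hx : 0 ≤ x) :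
    0 ≤ Wfun (wext w) x := by
  rcases eq_or_lt_of_le hx with h | h
  · rw [← h, Wfun_zero]
  · have := Wfun_strictMono hpos hmono h
    rw [Wfun_zero] at this; exact this.le

lemma upperEst (hpos : ∀ n, 0 < w n) (hmono : Monotone w) {K M x t : ℝ}
    (hK : 0 < K) (hM : Real.exp (Real.exp 1) ≤ M) (hx : M ≤ x) (hxt : x ≤ t)
    (hv : ∀ u, M ≤ u → K * (u * (llog u)) ≤ wext w u) :
    (∫ u in x..t, (wext w u)⁻¹) ≤ (K * (llog x))⁻¹ * (Real.log t - Real.log x) := by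
  have hMx : Real.exp (Real.exp 1) ≤ x := le_trans hM hx
  obtain ⟨hx1, _, hx3⟩ := base_facts hMx
  have hx0 : 0 < x := by linarith
  have hLx : (0:ℝ) < llog x := by linarith
  have key : ∀ u ∈ Icc x t, (wext w u)⁻¹ ≤ (K * (llog x))⁻¹ * u⁻¹ := by
    intro u hu
    have hu0 : 0 < u := lt_of_lt_of_le hx0 hu.1
    have h1 : K * ((llog x) * u) ≤ wext w u := by
      have := hv u (le_trans hx hu.1)
      have h2 : (llog x) ≤ llog u := llog_mono hMx hu.1
      calc K * ((llog x) * u) = (K*u) * (llog x) := by ring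
        _ ≤ (K*u) * (llog u) := mul_le_mul_of_nonneg_left h2 (by positivity)
        _ = K * (u * (llog u)) := by ring
        _ ≤ _ := this
    have h3 : (0:ℝ) < K * ((llog x) * u) := by positivity
    calc (wext w u)⁻¹ ≤ (K * ((llog x) * u))⁻¹ := inv_anti₀ h3 h1
      _ = (K * (llog x))⁻¹ * u⁻¹ := by rw [← mul_assoc, mul_inv]
  calc (∫ u in x..t, (wext w u)⁻¹)
      ≤ ∫ u in x..t, (K * (llog x))⁻¹ * u⁻¹ := by
        apply intervalIntegral.integral_mono_on hxt (vinv_ii hpos hmono x t) _ key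
        apply ContinuousOn.intervalIntegrable
        apply ContinuousOn.mul continuousOn_const
        apply ContinuousOn.inv₀ continuousOn_id
        intro u hu
        rw [uIcc_of_le hxt] at hu
        exact ne_of_gt (lt_of_lt_of_le hx0 hu.1)
    _ = (K * (llog x))⁻¹ * (Real.log t - Real.log x) := by
        rw [intervalIntegral.integral_const_mul, integral_inv_of_pos hx0 (lt_of_lt_of_le hx0 hxt),
          Real.log_div (by linarith) (by linarith)]

lemma lowerEst (hpos : ∀ n, 0 < w n) (hmono : Monotone w) {ε M x t : ℝ}
    (hε : 0 < ε) (hM : Real.exp (Real.exp 1) ≤ M) (hx : M ≤ x) (hxt : x ≤ t)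
    (hv : ∀ u, M ≤ u → wext w u ≤ ε * (u * (llog u))) :
    (ε * (llog t))⁻¹ * (Real.log t - Real.log x) ≤ ∫ u in x..t, (wext w u)⁻¹ := by
  have hMx : Real.exp (Real.exp 1) ≤ x := le_trans hM hx
  have hMt : Real.exp (Real.exp 1) ≤ t := le_trans hMx hxt
  obtain ⟨hx1, _, hx3⟩ := base_facts hMx
  obtain ⟨ht1, _, ht3⟩ := base_facts hMt
  have hx0 : 0 < x := by linarith
  have hLt : (0:ℝ) < llog t := by linarith
  have key : ∀ u ∈ Icc x t, (ε * (llog t))⁻¹ * u⁻¹ ≤ (wext w u)⁻¹ := by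
    intro u hu
    have hu0 : 0 < u := lt_of_lt_of_le hx0 hu.1
    have h1 : wext w u ≤ ε * ((llog t) * u) := by
      have := hv u (le_trans hx hu.1)
      have h2 : (llog u) ≤ llog t := llog_mono (le_trans hMx hu.1) hu.2
      have h4 : (0:ℝ) ≤ llog u := by
        have := (base_facts (le_trans hMx hu.1)).2.2; linarith
      calc wext w u ≤ ε * (u * (llog u)) := this
        _ = (ε*u) * (llog u) := by ring
        _ ≤ (ε*u) * (llog t) := mul_le_mul_of_nonneg_left h2 (by positivity)
        _ = ε * ((llog t) * u) := by ring
    have h3 : (0:ℝ) < wext w u := vpos hpos u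
    calc (ε * (llog t))⁻¹ * u⁻¹ = (ε * ((llog t) * u))⁻¹ := by
          rw [← mul_assoc, mul_inv (ε * (llog t)) u]
      _ ≤ (wext w u)⁻¹ := inv_anti₀ h3 h1
  calc (ε * (llog t))⁻¹ * (Real.log t - Real.log x)
      = ∫ u in x..t, (ε * (llog t))⁻¹ * u⁻¹ := by
        rw [intervalIntegral.integral_const_mul, integral_inv_of_pos hx0 (lt_of_lt_of_le hx0 hxt),
          Real.log_div (by linarith) (by linarith)]
    _ ≤ ∫ u in x..t, (wext w u)⁻¹ := by
        apply intervalIntegral.integral_mono_on hxt _ (vinv_ii hpos hmono x t) key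
        apply ContinuousOn.intervalIntegrable
        apply ContinuousOn.mul continuousOn_const
        apply ContinuousOn.inv₀ continuousOn_id
        intro u hu
        rw [uIcc_of_le hxt] at hu
        exact ne_of_gt (lt_of_lt_of_le hx0 hu.1)

lemma hasDeriv_aux (ρ : ℝ) {x : ℝ} (hρ : ρ ≠ 1) (hx : 1 < x) :
    HasDerivAt (fun y => (1-ρ)⁻¹ * Real.log y ^ (1-ρ))
      (x⁻¹ * Real.log x ^ (-ρ)) x := by
  have hlx : 0 < Real.log x := Real.log_pos hx
  have h1 : HasDerivAt Real.log x⁻¹ x := Real.hasDerivAt_log (by linarith)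
  have h2 : HasDerivAt (fun y : ℝ => y ^ (1-ρ)) ((1-ρ) * Real.log x ^ (1-ρ-1)) (Real.log x) :=
    Real.hasDerivAt_rpow_const (Or.inl (ne_of_gt hlx))
  have h3 := (h2.comp x h1).const_mul ((1-ρ)⁻¹)
  refine h3.congr_deriv (Eq.symm ?_)
  have e1 : 1 - ρ - 1 = -ρ := by ring
  have e2 : (1:ℝ) - ρ ≠ 0 := sub_ne_zero_of_ne (Ne.symm hρ)
  rw [e1, ← mul_assoc, ← mul_assoc, inv_mul_cancel₀ e2, one_mul, mul_comm]

lemma intLog {γ M : ℝ} (hγ : 1 < γ) (hM : Real.exp (Real.exp 1) ≤ M) :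
    IntegrableOn (fun x => x⁻¹ * Real.log x ^ (-γ)) (Ioi M) volume := by
  have hM1 : (1:ℝ) < M := lt_of_lt_of_le (Real.one_lt_exp_iff.2 (Real.exp_pos 1)) hM
  apply integrableOn_Ioi_deriv_of_nonneg (l := 0)
  · exact ((hasDeriv_aux γ (by linarith) hM1).continuousAt).continuousWithinAt
  · intro x hx
    exact hasDeriv_aux γ (by linarith) (lt_trans hM1 hx)
  · intro x hx
    have hx1 : 1 < x := lt_trans hM1 hx
    have : (0:ℝ) < Real.log x := Real.log_pos hx1
    positivity
  · have h1 : Tendsto (fun x : ℝ => x ^ (-(γ-1))) atTop (𝓝 0) :=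
      tendsto_rpow_neg_atTop (by linarith)
    have h2 := (h1.comp Real.tendsto_log_atTop).const_mul ((1-γ)⁻¹)
    simp only [mul_zero] at h2
    have e : ∀ y:ℝ, ((1:ℝ)-γ)⁻¹ * ((fun x : ℝ => x ^ (-(γ-1))) ∘ Real.log) y
        = (1-γ)⁻¹ * Real.log y ^ (1-γ) := by
      intro y; simp only [Function.comp]; rw [show -(γ-1) = (1:ℝ)-γ by ring]
    exact h2.congr e

lemma notIntLog {ρ M c : ℝ} (hρ : ρ < 1) (hc : 0 < c)
    (hM : Real.exp (Real.exp 1) ≤ M) :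
    ∫⁻ x in Ioi M, ENNReal.ofReal (c * (x⁻¹ * Real.log x ^ (-ρ))) = ⊤ := by
  have hM1 : (1:ℝ) < M := lt_of_lt_of_le (Real.one_lt_exp_iff.2 (Real.exp_pos 1)) hM
  set f : ℝ → ℝ := fun x => c * (x⁻¹ * Real.log x ^ (-ρ)) with hf
  set G : ℝ → ℝ := fun x => c * ((1-ρ)⁻¹ * Real.log x ^ (1-ρ)) with hG
  -- FTC on [M, T]
  have hcont : ∀ T : ℝ, M ≤ T → ContinuousOn f (Icc M T) := by
    intro T _
    apply ContinuousOn.mul continuousOn_const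
    apply ContinuousOn.mul
    · exact ContinuousOn.inv₀ continuousOn_id
        (fun x hx => ne_of_gt (lt_of_lt_of_le (by linarith) hx.1))
    · apply ContinuousOn.rpow_const
      · exact Real.continuousOn_log.mono (fun x hx => ne_of_gt (lt_of_lt_of_le (by linarith) hx.1))
      · intro x hx
        exact Or.inl (ne_of_gt (Real.log_pos (lt_of_lt_of_le hM1 hx.1)))
  have hFTC : ∀ T : ℝ, M ≤ T → ∫ x in M..T, f x = G T - G M := by
    intro T hT
    apply intervalIntegral.integral_eq_sub_of_hasDerivAt
    · intro x hx
      rw [uIcc_of_le hT] at hx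
      exact ((hasDeriv_aux ρ (ne_of_lt hρ) (lt_of_lt_of_le hM1 hx.1)).const_mul c)
    · exact ((hcont T hT).mono (by rw [uIcc_of_le hT])).intervalIntegrable
  -- lower bound by ofReal (G T - G M)
  have hlow : ∀ T : ℝ, M ≤ T → ENNReal.ofReal (G T - G M) ≤ ∫⁻ x in Ioi M, ENNReal.ofReal (f x) := by
    intro T hT
    have hint : IntegrableOn f (Ioc M T) volume :=
      ((hcont T hT).integrableOn_compact isCompact_Icc).mono_set Ioc_subset_Icc_self
    have hnn : 0 ≤ᵐ[volume.restrict (Ioc M T)] f := by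
      rw [Filter.EventuallyLE, ae_restrict_iff' measurableSet_Ioc]
      apply Filter.Eventually.of_forall
      intro x hx
      have hx1 : 1 < x := lt_trans hM1 hx.1
      have h2 : (0:ℝ) < Real.log x := Real.log_pos hx1
      have : (0:ℝ) < x := by linarith
      positivity
    calc ENNReal.ofReal (G T - G M) = ENNReal.ofReal (∫ x in Ioc M T, f x) := by
          rw [← hFTC T hT, intervalIntegral.integral_of_le hT]
      _ = ∫⁻ x in Ioc M T, ENNReal.ofReal (f x) :=
          ofReal_integral_eq_lintegral_ofReal hint hnn
      _ ≤ ∫⁻ x in Ioi M, ENNReal.ofReal (f x) :=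
          lintegral_mono' (Measure.restrict_mono Ioc_subset_Ioi_self le_rfl) le_rfl
  -- G T → ∞
  have hGtop : Tendsto G atTop atTop := by
    have h1 : Tendsto (fun x : ℝ => x ^ (1-ρ)) atTop atTop := tendsto_rpow_atTop (by linarith)
    have h2 := (h1.comp Real.tendsto_log_atTop).const_mul_atTop
      (mul_pos hc (inv_pos.2 (show (0:ℝ) < 1-ρ by linarith)))
    apply h2.congr
    intro x
    simp only [Function.comp, hG]
    ring
  have := (ENNReal.tendsto_ofReal_atTop.comp (hGtop.atTop_add (tendsto_const_nhds (x := -G M))))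
  have hle : ⊤ ≤ ∫⁻ x in Ioi M, ENNReal.ofReal (f x) := by
    apply le_of_tendsto this
    filter_upwards [Filter.eventually_ge_atTop M] with T hT
    exact hlow T hT
  exact top_le_iff.mp hle

lemma finIa (hpos : ∀ n, 0 < w n) (hmono : Monotone w) (Winv : ℝ → ℝ)
    (hWinv' : ∀ y : ℝ, 0 ≤ y → Wfun (wext w) (Winv y) = y)
    {K M α : ℝ} (hK : 0 < K) (hM : Real.exp (Real.exp 1) ≤ M) (hα : 2 < K * α)
    (hv : ∀ u, M ≤ u → K * (u * (llog u)) ≤ wext w u) :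
    Ia (wext w) Winv α < ⊤ := by
  have hα0 : 0 < α := by nlinarith
  set γ := K * α / 2 with hγdef
  have hγ : 1 < γ := by rw [hγdef]; linarith
  have hM0 : (0:ℝ) < M := lt_of_lt_of_le (Real.exp_pos _) hM
  -- pointwise bound on Ioi M
  have key : ∀ x ∈ Ioi M, (wext w (Winv (Wfun (wext w) x + α)))⁻¹
      ≤ K⁻¹ * (x⁻¹ * Real.log x ^ (-γ)) := by
    intro x hx
    have hx' : M ≤ x := (le_of_lt hx)
    have hMx : Real.exp (Real.exp 1) ≤ x := le_trans hM hx'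
    obtain ⟨hx1, hx2, hx3⟩ := base_facts hMx
    have hlogx : (0:ℝ) < Real.log x := Real.log_pos hx1
    have hlogx1 : (1:ℝ) ≤ Real.log x := le_trans (by
      have := Real.add_one_le_exp (1:ℝ); linarith) hx2
    have hx0 : (0:ℝ) < x := by linarith
    set t := x * Real.log x ^ γ with htdef
    have hrp : (0:ℝ) < Real.log x ^ γ := Real.rpow_pos_of_pos hlogx γ
    have hrp1 : (1:ℝ) ≤ Real.log x ^ γ := Real.one_le_rpow hlogx1 (by linarith)
    have hxt : x ≤ t := by
      rw [htdef]; nlinarith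
    have hlogt : Real.log t = Real.log x + γ * (llog x) := by
      rw [htdef, Real.log_mul (ne_of_gt hx0) (ne_of_gt hrp), Real.log_rpow hlogx]
    -- W t ≤ W x + α
    have hWt : Wfun (wext w) t ≤ Wfun (wext w) x + α := by
      rw [Wfun_sub hpos hmono x t]
      have h1 := upperEst hpos hmono hK hM hx' hxt hv
      have h2 : (K * (llog x))⁻¹ * (Real.log t - Real.log x) = α / 2 := by
        rw [hlogt]
        have hL : (llog x) ≠ 0 := by linarith
        field_simp [hγdef]
        ring
      linarith
    set y := Winv (Wfun (wext w) x + α) with hydef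
    have hWy : Wfun (wext w) y = Wfun (wext w) x + α :=
      hWinv' _ (add_nonneg (Wfun_nonneg hpos hmono hx0.le) hα0.le)
    have hty : t ≤ y := by
      have := hWt.trans_eq hWy.symm
      exact (Wfun_strictMono hpos hmono).le_iff_le.mp this
    -- lower bound on wext w y
    have hvy : K * (x * Real.log x ^ γ) ≤ wext w y := by
      have h1 : wext w t ≤ wext w y := vmono hmono hty
      have h2 : K * (t * (llog t)) ≤ wext w t := hv t (le_trans hx' hxt)
      have h3 : (llog x) ≤ llog t := llog_mono hMx hxt
      have h4 : (0:ℝ) < t := by nlinarith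
      have h5 : K * (x * Real.log x ^ γ) ≤ K * (t * (llog t)) := by
        have : x * Real.log x ^ γ * 1 ≤ t * (llog t) := by
          rw [htdef]
          have : (1:ℝ) ≤ llog t := le_trans hx3 h3
          nlinarith
        nlinarith
      linarith
    have hvy0 : (0:ℝ) < K * (x * Real.log x ^ γ) := by positivity
    calc (wext w y)⁻¹ ≤ (K * (x * Real.log x ^ γ))⁻¹ := inv_anti₀ hvy0 hvy
      _ = K⁻¹ * (x⁻¹ * Real.log x ^ (-γ)) := by
        rw [Real.rpow_neg hlogx.le, mul_inv, mul_inv]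
  -- assemble
  have hsplit : Ia (wext w) Winv α
      = (∫⁻ x in Ioc 0 M, ENNReal.ofReal (wext w (Winv (Wfun (wext w) x + α)))⁻¹)
      + ∫⁻ x in Ioi M, ENNReal.ofReal (wext w (Winv (Wfun (wext w) x + α)))⁻¹ := by
    rw [Ia, ← lintegral_union measurableSet_Ioi (Ioc_disjoint_Ioi le_rfl),
      Ioc_union_Ioi_eq_Ioi hM0.le]
  rw [hsplit]
  have part1 : (∫⁻ x in Ioc 0 M, ENNReal.ofReal (wext w (Winv (Wfun (wext w) x + α)))⁻¹)
      ≤ ENNReal.ofReal ((w 0)⁻¹) * ENNReal.ofReal M := by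
    calc (∫⁻ x in Ioc 0 M, ENNReal.ofReal (wext w (Winv (Wfun (wext w) x + α)))⁻¹)
        ≤ ∫⁻ _ in Ioc 0 M, ENNReal.ofReal ((w 0)⁻¹) := by
          apply lintegral_mono
          intro x
          apply ENNReal.ofReal_le_ofReal
          exact inv_anti₀ (hpos 0) (hmono (Nat.zero_le _))
      _ = ENNReal.ofReal ((w 0)⁻¹) * volume (Ioc 0 M) := setLIntegral_const _ _
      _ = ENNReal.ofReal ((w 0)⁻¹) * ENNReal.ofReal M := by
          rw [Real.volume_Ioc, sub_zero]
  have part2 : (∫⁻ x in Ioi M, ENNReal.ofReal (wext w (Winv (Wfun (wext w) x + α)))⁻¹)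
      ≤ ∫⁻ x in Ioi M, ENNReal.ofReal (K⁻¹ * (x⁻¹ * Real.log x ^ (-γ))) := by
    apply lintegral_mono_ae
    rw [ae_restrict_iff' measurableSet_Ioi]
    apply Filter.Eventually.of_forall
    intro x hx
    exact ENNReal.ofReal_le_ofReal (key x hx)
  have hint : Integrable (fun x => K⁻¹ * (x⁻¹ * Real.log x ^ (-γ)))
      (volume.restrict (Ioi M)) := (intLog hγ hM).const_mul _
  have part2' : (∫⁻ x in Ioi M, ENNReal.ofReal (K⁻¹ * (x⁻¹ * Real.log x ^ (-γ)))) < ⊤ :=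
    hint.lintegral_lt_top
  calc _ ≤ ENNReal.ofReal ((w 0)⁻¹) * ENNReal.ofReal M
        + ∫⁻ x in Ioi M, ENNReal.ofReal (K⁻¹ * (x⁻¹ * Real.log x ^ (-γ))) :=
        add_le_add part1 part2
    _ < ⊤ := ENNReal.add_lt_top.mpr ⟨ENNReal.mul_lt_top ENNReal.ofReal_lt_top ENNReal.ofReal_lt_top, part2'⟩

lemma infIa (hpos : ∀ n, 0 < w n) (hmono : Monotone w) (Winv : ℝ → ℝ)
    (hWinv' : ∀ y : ℝ, 0 ≤ y → Wfun (wext w) (Winv y) = y)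
    {ε M α : ℝ} (hε : 0 < ε) (hα : 0 < α) (hδ : 2 * ε * α < 1)
    (hM : Real.exp (Real.exp 1) ≤ M)
    (hv : ∀ u, M ≤ u → wext w u ≤ ε * (u * (llog u))) :
    Ia (wext w) Winv α = ⊤ := by
  set δ := 2 * ε * α with hδdef
  have hδ0 : 0 < δ := by positivity
  clear_value δ
  set s := (1 - δ) / 2 with hsdef
  have hs0 : 0 < s := by rw [hsdef]; linarith
  clear_value s
  set ρ := δ + s with hρdef
  have hρ1 : ρ < 1 := by rw [hρdef, hsdef]; linarith
  clear_value ρ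
  have hM0 : (0:ℝ) < M := lt_of_lt_of_le (Real.exp_pos _) hM
  have key : ∀ x ∈ Ioi M, (s / (2*ε)) * (x⁻¹ * Real.log x ^ (-ρ))
      ≤ (wext w (Winv (Wfun (wext w) x + α)))⁻¹ := by
    intro x hx
    have hx' : M ≤ x := le_of_lt hx
    have hMx : Real.exp (Real.exp 1) ≤ x := le_trans hM hx'
    obtain ⟨hx1, hx2, hx3⟩ := base_facts hMx
    have hlogx : (0:ℝ) < Real.log x := Real.log_pos hx1
    have hlogx1 : (1:ℝ) ≤ Real.log x := le_trans (by
      have := Real.add_one_le_exp (1:ℝ); linarith) hx2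
    have hx0 : (0:ℝ) < x := by linarith
    set t := x * Real.log x ^ δ with htdef
    clear_value t
    have hrp : (0:ℝ) < Real.log x ^ δ := Real.rpow_pos_of_pos hlogx δ
    have hrp1 : (1:ℝ) ≤ Real.log x ^ δ := Real.one_le_rpow hlogx1 hδ0.le
    have hxt : x ≤ t := by rw [htdef]; nlinarith
    have ht0 : (0:ℝ) < t := lt_of_lt_of_le hx0 hxt
    have hlogt : Real.log t = Real.log x + δ * (llog x) := by
      rw [htdef, Real.log_mul (ne_of_gt hx0) (ne_of_gt hrp), Real.log_rpow hlogx]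
    have hMt : Real.exp (Real.exp 1) ≤ t := le_trans hMx hxt
    obtain ⟨ht1, ht2, ht3⟩ := base_facts hMt
    have hlogt0 : (0:ℝ) < Real.log t := Real.log_pos ht1
    -- llog x ≤ log x
    have hLlx : (llog x) ≤ Real.log x := by
      have := Real.log_le_sub_one_of_pos hlogx; linarith
    -- llog t ≤ 2 * llog x
    have hLt2 : (llog t) ≤ 2 * (llog x) := by
      have h1 : Real.log t ≤ 2 * Real.log x := by
        rw [hlogt]; nlinarith
      have h2 : (llog t) ≤ Real.log (2 * Real.log x) := Real.log_le_log hlogt0 h1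
      have h3 : Real.log (2 * Real.log x) = Real.log 2 + (llog x) := by
        rw [Real.log_mul two_ne_zero (ne_of_gt hlogx)]
      have h4 : Real.log 2 ≤ 1 := by
        have := Real.log_le_sub_one_of_pos (show (0:ℝ) < 2 by norm_num); linarith
      linarith
    -- W t ≥ W x + α
    have hWt : Wfun (wext w) x + α ≤ Wfun (wext w) t := by
      rw [Wfun_sub hpos hmono x t]
      have h1 := lowerEst hpos hmono hε hM hx' hxt hv
      have h2 : α ≤ (ε * (llog t))⁻¹ * (Real.log t - Real.log x) := by
        have hpos2 : (0:ℝ) < ε * (llog t) := mul_pos hε (lt_of_lt_of_le one_pos ht3)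
        rw [inv_mul_eq_div, le_div_iff₀ hpos2]
        have he : Real.log t - Real.log x = δ * (llog x) := by rw [hlogt]; ring
        rw [he]
        nlinarith [mul_le_mul_of_nonneg_left hLt2 (mul_pos hα hε).le]
      linarith
    set y := Winv (Wfun (wext w) x + α) with hydef
    have hWy : Wfun (wext w) y = Wfun (wext w) x + α :=
      hWinv' _ (add_nonneg (Wfun_nonneg hpos hmono hx0.le) hα.le)
    have hyt : y ≤ t := by
      have : Wfun (wext w) y ≤ Wfun (wext w) t := hWy.le.trans hWt
      exact (Wfun_strictMono hpos hmono).le_iff_le.mp this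
    -- upper bound on wext w y
    have hLsx : (llog x) ≤ s⁻¹ * Real.log x ^ s := by
      have h1 : Real.log (Real.log x ^ s) = s * (llog x) := Real.log_rpow hlogx s
      have h2 : Real.log (Real.log x ^ s) ≤ Real.log x ^ s := by
        have := Real.log_le_sub_one_of_pos (Real.rpow_pos_of_pos hlogx s); linarith
      rw [h1] at h2
      rw [inv_mul_eq_div, le_div_iff₀ hs0]
      linarith
    have hvy : wext w y ≤ (2*ε/s) * (x * Real.log x ^ ρ) := by
      have h1 : wext w y ≤ wext w t := vmono hmono hyt
      have h2 : wext w t ≤ ε * (t * (llog t)) := hv t (le_trans hx' hxt)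
      have h3 : ε * (t * (llog t)) ≤ ε * (t * (2 * (llog x))) :=
        mul_le_mul_of_nonneg_left (mul_le_mul_of_nonneg_left hLt2 ht0.le) hε.le
      have h4 : ε * (t * (2 * (llog x))) ≤ ε * (t * (2 * (s⁻¹ * Real.log x ^ s))) :=
        mul_le_mul_of_nonneg_left (mul_le_mul_of_nonneg_left
          (mul_le_mul_of_nonneg_left hLsx (by norm_num)) ht0.le) hε.le
      have h5 : ε * (t * (2 * (s⁻¹ * Real.log x ^ s))) = (2*ε/s) * (x * Real.log x ^ ρ) := by
        rw [htdef, hρdef, Real.rpow_add hlogx]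
        field_simp
      linarith
    have hb0 : (0:ℝ) < (2*ε/s) * (x * Real.log x ^ ρ) := by
      have := Real.rpow_pos_of_pos hlogx ρ
      positivity
    calc (s / (2*ε)) * (x⁻¹ * Real.log x ^ (-ρ))
        = ((2*ε/s) * (x * Real.log x ^ ρ))⁻¹ := by
          rw [Real.rpow_neg hlogx.le, mul_inv, mul_inv, inv_div]
      _ ≤ (wext w y)⁻¹ := inv_anti₀ (vpos hpos y) hvy
  -- conclude
  have h1 : (∫⁻ x in Ioi M, ENNReal.ofReal ((s / (2*ε)) * (x⁻¹ * Real.log x ^ (-ρ))))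
      ≤ ∫⁻ x in Ioi M, ENNReal.ofReal (wext w (Winv (Wfun (wext w) x + α)))⁻¹ := by
    apply lintegral_mono_ae
    rw [ae_restrict_iff' measurableSet_Ioi]
    exact Filter.Eventually.of_forall (fun x hx => ENNReal.ofReal_le_ofReal (key x hx))
  have h2 := notIntLog hρ1 (show (0:ℝ) < s / (2*ε) by positivity) hM
  have h3 : (∫⁻ x in Ioi M, ENNReal.ofReal (wext w (Winv (Wfun (wext w) x + α)))⁻¹)
      ≤ Ia (wext w) Winv α := by
    rw [Ia]
    exact lintegral_mono' (Measure.restrict_mono (Ioi_subset_Ioi hM0.le) le_rfl) le_rfl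
  have h4 : (⊤:ℝ≥0∞) ≤ Ia (wext w) Winv α := by rw [← h2]; exact h1.trans h3
  exact top_le_iff.mp h4

lemma natToReal_lower {C : ℝ} {N : ℕ} (hC : 0 < C)
    (h : ∀ n : ℕ, N ≤ n → C * ((n:ℝ) * (llog (n:ℝ))) ≤ w n) :
    ∀ u : ℝ, max ((N:ℝ)+1) (Real.exp (Real.exp 2)) ≤ u →
      (C/4) * (u * (llog u)) ≤ wext w u := by
  intro u hu
  have huN : (N:ℝ) + 1 ≤ u := le_trans (le_max_left _ _) hu
  have huE : Real.exp (Real.exp 2) ≤ u := le_trans (le_max_right _ _) hu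
  -- numeric facts
  have he2 : (3:ℝ) ≤ Real.exp 2 := by
    have := Real.add_one_le_exp (2:ℝ); linarith
  have hu4 : (4:ℝ) ≤ u := by
    have h1 : Real.exp 3 ≤ Real.exp (Real.exp 2) := Real.exp_le_exp.2 he2
    have h2 := Real.add_one_le_exp (3:ℝ)
    linarith
  have hu0 : (0:ℝ) < u := by linarith
  have hlogu : Real.exp 2 ≤ Real.log u := by
    have := Real.log_le_log (Real.exp_pos _) huE
    rwa [Real.log_exp] at this
  have hlogu0 : (0:ℝ) < Real.log u := lt_of_lt_of_le (Real.exp_pos 2) hlogu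
  have hllogu : (2:ℝ) ≤ llog u := by
    have := Real.log_le_log (Real.exp_pos _) hlogu
    rwa [Real.log_exp] at this
  -- floor facts
  set n := ⌊u⌋₊ with hn
  have hnu : u - 1 < (n:ℝ) := Nat.sub_one_lt_floor u
  have hnu' : (n:ℝ) ≤ u := Nat.floor_le hu0.le
  have hNn : N ≤ n := by
    have : (N:ℝ) < (n:ℝ) := by linarith
    exact_mod_cast this.le
  have hn2 : u/2 ≤ (n:ℝ) := by linarith
  -- sqrt facts
  have hsq := Real.mul_self_sqrt hu0.le
  have hsqpos : (0:ℝ) < Real.sqrt u := Real.sqrt_pos.2 hu0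
  have hsq2 : (2:ℝ) ≤ Real.sqrt u := by nlinarith
  have hsqn : Real.sqrt u ≤ (n:ℝ) := by nlinarith
  -- log n ≥ log u / 2
  have hlogn : Real.log u / 2 ≤ Real.log (n:ℝ) := by
    have h1 : Real.log (Real.sqrt u) ≤ Real.log (n:ℝ) := Real.log_le_log hsqpos hsqn
    rwa [Real.log_sqrt hu0.le] at h1
  have hlogn0 : (0:ℝ) < Real.log u / 2 := by linarith
  -- llog n ≥ llog u / 2
  have hllogn : (llog u) / 2 ≤ llog (n:ℝ) := by
    have h1 : Real.log (Real.log u / 2) ≤ llog (n:ℝ) := Real.log_le_log hlogn0 hlogn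
    have h2 : Real.log (Real.log u / 2) = (llog u) - Real.log 2 := by
      rw [Real.log_div (ne_of_gt hlogu0) two_ne_zero]
    have h3 : Real.log 2 ≤ 1 := by
      have := Real.log_le_sub_one_of_pos (show (0:ℝ) < 2 by norm_num); linarith
    linarith
  -- combine
  have hw := h n hNn
  have hprod : (u/2) * ((llog u)/2) ≤ (n:ℝ) * (llog (n:ℝ)) := by
    apply mul_le_mul hn2 hllogn (by linarith) (by linarith)
  calc (C/4) * (u * (llog u)) = C * ((u/2) * ((llog u)/2)) := by ring
    _ ≤ C * ((n:ℝ) * (llog (n:ℝ))) := mul_le_mul_of_nonneg_left hprod hC.le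
    _ ≤ w n := hw

lemma natToReal_upper {c : ℝ} {N : ℕ} (hc : 0 < c)
    (h : ∀ n : ℕ, N ≤ n → w n ≤ c * ((n:ℝ) * (llog (n:ℝ)))) :
    ∀ u : ℝ, max ((N:ℝ)+1) (Real.exp (Real.exp 1)) ≤ u →
      wext w u ≤ c * (u * (llog u)) := by
  intro u hu
  have huN : (N:ℝ) + 1 ≤ u := le_trans (le_max_left _ _) hu
  have huE : Real.exp (Real.exp 1) ≤ u := le_trans (le_max_right _ _) hu
  have he1 : Real.exp 1 + 1 ≤ Real.exp (Real.exp 1) := Real.add_one_le_exp _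
  have hu0 : (0:ℝ) < u := lt_of_lt_of_le (Real.exp_pos _) huE
  set n := ⌊u⌋₊ with hn
  have hnu : u - 1 < (n:ℝ) := Nat.sub_one_lt_floor u
  have hnu' : (n:ℝ) ≤ u := Nat.floor_le hu0.le
  have hNn : N ≤ n := by
    have : (N:ℝ) < (n:ℝ) := by linarith
    exact_mod_cast this.le
  have hne : Real.exp 1 ≤ (n:ℝ) := by linarith
  have hn0 : (0:ℝ) < (n:ℝ) := lt_of_lt_of_le (Real.exp_pos 1) hne
  have hlogn : (1:ℝ) ≤ Real.log (n:ℝ) := by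
    have := Real.log_le_log (Real.exp_pos 1) hne
    rwa [Real.log_exp] at this
  have hlogn0 : (0:ℝ) < Real.log (n:ℝ) := by linarith
  have hllogn0 : (0:ℝ) ≤ llog (n:ℝ) := Real.log_nonneg hlogn
  have hlogle : Real.log (n:ℝ) ≤ Real.log u := Real.log_le_log hn0 hnu'
  have hllogle : (llog (n:ℝ)) ≤ llog u := Real.log_le_log hlogn0 hlogle
  have hprod : (n:ℝ) * (llog (n:ℝ)) ≤ u * (llog u) :=
    mul_le_mul hnu' hllogle hllogn0 hu0.le
  exact le_trans (h n hNn) (mul_le_mul_of_nonneg_left hprod hc.le)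


-- MAIN

lemma denom_pos : ∀ᶠ n : ℕ in atTop, 0 < (n:ℝ) * (llog (n:ℝ)) := by
  filter_upwards [eventually_ge_atTop 3] with n hn
  have h3 : (3:ℝ) ≤ (n:ℝ) := by exact_mod_cast hn
  have hlog : 1 < Real.log (n:ℝ) := by
    rw [Real.lt_log_iff_exp_lt (by linarith)]
    have := Real.exp_one_lt_d9
    linarith
  exact mul_pos (by linarith) (Real.log_pos hlog)

/-- comparison of `w(n)` with `n log log n`: if `w(n)/(n log log n) → ∞` then
`α_c(w) = 0`; if `c⁻¹ n log log n ≤ w(n) ≤ c n log log n` for large `n` then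
`α_c(w) ∈ (0,∞)`; if `w(n)/(n log log n) → 0` then `α_c(w) = ∞`. -/
theorem stmt8 (w : ℕ → ℝ) (hpos : ∀ n, 0 < w n) (hmono : Monotone w)
    (hdiv : ¬ Summable (fun n : ℕ => (w n)⁻¹))
    (Winv : ℝ → ℝ)
    (hWinv : ∀ t : ℝ, 0 ≤ t → Winv (Wfun (wext w) t) = t)
    (hWinv' : ∀ y : ℝ, 0 ≤ y → Wfun (wext w) (Winv y) = y) :
    (Tendsto (fun n : ℕ => w n / (n * Real.log (Real.log n))) atTop atTop →
        alphac (wext w) Winv = 0) ∧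
    ((∃ c : ℝ, 0 < c ∧ ∀ᶠ n : ℕ in atTop,
        c⁻¹ * (n * Real.log (Real.log n)) ≤ w n ∧
        w n ≤ c * (n * Real.log (Real.log n))) →
        0 < alphac (wext w) Winv ∧ alphac (wext w) Winv < ⊤) ∧
    (Tendsto (fun n : ℕ => w n / (n * Real.log (Real.log n))) atTop (nhds 0) →
        alphac (wext w) Winv = ⊤) := by
  have hE12 : Real.exp (Real.exp 1) ≤ Real.exp (Real.exp 2) :=
    Real.exp_le_exp.2 (Real.exp_le_exp.2 one_le_two)
  refine ⟨?_, ?_, ?_⟩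
  · -- first regime
    intro ht
    have hfin : ∀ α : ℝ, 0 < α → Ia (wext w) Winv α < ⊤ := by
      intro α hα
      have hC0 : (0:ℝ) < 9/α := by positivity
      obtain ⟨N, hN⟩ := eventually_atTop.mp ((ht.eventually_ge_atTop (9/α)).and denom_pos)
      have h3 : ∀ n : ℕ, N ≤ n → (9/α) * ((n:ℝ) * (llog (n:ℝ))) ≤ w n := by
        intro n hn
        obtain ⟨ha, hb⟩ := hN n hn
        rw [le_div_iff₀ hb] at ha
        linarith
      have hv := natToReal_lower hC0 h3
      have hM : Real.exp (Real.exp 1) ≤ max ((N:ℝ)+1) (Real.exp (Real.exp 2)) :=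
        le_trans hE12 (le_max_right _ _)
      refine finIa hpos hmono Winv hWinv' (by positivity) hM ?_ hv
      have : (9/α)/4 * α = 9/4 := by field_simp
      rw [this]; norm_num
    have hle : ∀ α : ℝ, 0 < α → alphac (wext w) Winv ≤ ENNReal.ofReal α := by
      intro α hα
      exact sInf_le ⟨α, ⟨hα, hfin α hα⟩, rfl⟩
    have h0 : Tendsto (fun n : ℕ => ENNReal.ofReal (1/((n:ℝ)+1))) atTop (𝓝 0) := by
      have h1 : Tendsto (fun n : ℕ => 1/((n:ℝ)+1)) atTop (𝓝 0) :=
        tendsto_one_div_add_atTop_nhds_zero_nat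
      have := ENNReal.tendsto_ofReal h1
      simpa using this
    have := ge_of_tendsto' h0 (fun n => hle _ (by positivity))
    exact le_antisymm this (by simp)
  · -- middle regime
    rintro ⟨c, hc, hev⟩
    obtain ⟨N, hN⟩ := eventually_atTop.mp hev
    have h3 : ∀ n : ℕ, N ≤ n → c⁻¹ * ((n:ℝ) * (llog (n:ℝ))) ≤ w n := fun n hn => (hN n hn).1
    have h4 : ∀ n : ℕ, N ≤ n → w n ≤ c * ((n:ℝ) * (llog (n:ℝ))) := fun n hn => (hN n hn).2
    have hv1 := natToReal_lower (inv_pos.2 hc) h3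
    have hv2 := natToReal_upper hc h4
    have hM1 : Real.exp (Real.exp 1) ≤ max ((N:ℝ)+1) (Real.exp (Real.exp 2)) :=
      le_trans hE12 (le_max_right _ _)
    have hfin : Ia (wext w) Winv (9*c) < ⊤ := by
      refine finIa hpos hmono Winv hWinv' (by positivity) hM1 ?_ hv1
      have : c⁻¹/4 * (9*c) = 9/4 := by field_simp
      rw [this]; norm_num
    constructor
    · have hbound : ∀ b ∈ ENNReal.ofReal '' {α : ℝ | 0 < α ∧ Ia (wext w) Winv α < ⊤},
          ENNReal.ofReal (1/(2*c)) ≤ b := by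
        rintro b ⟨α, ⟨hα0, hαfin⟩, rfl⟩
        apply ENNReal.ofReal_le_ofReal
        by_contra hlt
        push_neg at hlt
        have hδ : 2*c*α < 1 := by
          rw [lt_div_iff₀ (by positivity)] at hlt
          linarith
        have := infIa hpos hmono Winv hWinv' hc hα0 hδ (le_max_right _ _) hv2
        rw [this] at hαfin
        exact lt_irrefl _ hαfin
      exact lt_of_lt_of_le (ENNReal.ofReal_pos.2 (by positivity)) (le_sInf hbound)
    · exact lt_of_le_of_lt (sInf_le ⟨9*c, ⟨by positivity, hfin⟩, rfl⟩) ENNReal.ofReal_lt_top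
  · -- third regime
    intro ht
    have hinf : ∀ α : ℝ, 0 < α → Ia (wext w) Winv α = ⊤ := by
      intro α hα
      have hε0 : (0:ℝ) < 1/(4*α) := by positivity
      obtain ⟨N, hN⟩ := eventually_atTop.mp ((ht.eventually_lt_const hε0).and denom_pos)
      have h3 : ∀ n : ℕ, N ≤ n → w n ≤ (1/(4*α)) * ((n:ℝ) * (llog (n:ℝ))) := by
        intro n hn
        obtain ⟨ha, hb⟩ := hN n hn
        rw [div_lt_iff₀ hb] at ha
        linarith
      have hv := natToReal_upper hε0 h3
      have hδ : 2*(1/(4*α))*α < 1 := by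
        have : 2*(1/(4*α))*α = 1/2 := by field_simp; ring
        rw [this]; norm_num
      exact infIa hpos hmono Winv hWinv' hε0 hα hδ (le_max_right _ _) hv
    have hempty : {α : ℝ | 0 < α ∧ Ia (wext w) Winv α < ⊤} = ∅ := by
      ext α
      simp only [mem_setOf_eq, mem_empty_iff_false, iff_false, not_and]
      intro h1
      rw [hinf α h1]
      simp
    rw [alphac, hempty, image_empty, sInf_empty]
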